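/- Let p ≥ 2 be an even integer and set τ = 13 + p. Consider the τ rational numbers consisting of 8/9, 11/9, 13/9, 14/9, 16/9 together with 1 + k/(p+9) for 1 ≤ k ≤ p/2 + 4 and 2 − k/(p+9) for 1 ≤ k ≤ p/2 + 4. Let x̄ be their average (equal to (340 + 27p)/(234 + 18p)). Then the sum of (x − x̄)² over these τ numbers is at most (τ/12)·( (2 − 1/(p+9)) − 8/9 ). -/
import Mathlib

lemma sum_sq_aff (a c : ℚ) (n : ℕ) :
    ∑ k ∈ Finset.Icc 1 n, (a + (k : ℚ) * c) ^ 2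
      = n * a ^ 2 + a * c * n * (n + 1) + c ^ 2 * (n * (n + 1) * (2 * n + 1)) / 6 := by
  induction n with
  | zero => simp
  | succ n ih =>
    rw [Finset.sum_Icc_succ_top (by omega), ih]
    push_cast
    ring

/-- Generalized Hertling inequality for the Tjurina spectrum of `U_{1,p}` (`p` even). -/
theorem stmt_19 (p : ℕ) (hp : 2 ≤ p) (hpe : Even p)
    (τ : ℚ) (hτ : τ = 13 + (p : ℚ))
    (xbar : ℚ) (hxbar : xbar = (340 + 27 * (p : ℚ)) / (234 + 18 * (p : ℚ))) :
    ((8/9 : ℚ) - xbar) ^ 2 + ((11/9 : ℚ) - xbar) ^ 2 + ((13/9 : ℚ) - xbar) ^ 2 +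
      ((14/9 : ℚ) - xbar) ^ 2 + ((16/9 : ℚ) - xbar) ^ 2 +
      ∑ k ∈ Finset.Icc 1 (p / 2 + 4),
        ((1 + (k : ℚ) / ((p : ℚ) + 9)) - xbar) ^ 2 +
      ∑ k ∈ Finset.Icc 1 (p / 2 + 4),
        ((2 - (k : ℚ) / ((p : ℚ) + 9)) - xbar) ^ 2
    ≤ (τ / 12) * ((2 - 1 / ((p : ℚ) + 9)) - 8/9) := by
  obtain ⟨m, rfl⟩ := hpe
  have hdiv : (m + m) / 2 + 4 = m + 4 := by omega
  have h1 : ∀ k : ℕ, ((1 + (k : ℚ) / (((m + m : ℕ) : ℚ) + 9)) - xbar) ^ 2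
      = ((1 - xbar) + (k : ℚ) * (1 / (((m + m : ℕ) : ℚ) + 9))) ^ 2 := by
    intro k; ring
  have h2 : ∀ k : ℕ, ((2 - (k : ℚ) / (((m + m : ℕ) : ℚ) + 9)) - xbar) ^ 2
      = ((2 - xbar) + (k : ℚ) * (-(1 / (((m + m : ℕ) : ℚ) + 9)))) ^ 2 := by
    intro k; ring
  simp only [hdiv, h1, h2, sum_sq_aff]
  have hm0 : (0 : ℚ) ≤ (m : ℚ) := Nat.cast_nonneg m
  have hq : (((m + m : ℕ) : ℚ)) = 2 * m := by push_cast; ring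
  rw [hτ, hxbar, hq]
  push_cast
  rw [← sub_nonneg]
  have hd1 : (234 + 18 * (2 * (m : ℚ))) ≠ 0 := by positivity
  have hd2 : (2 * (m : ℚ) + 9) ≠ 0 := by positivity
  have key : (13 + 2 * (m : ℚ)) / 12 * (2 - 1 / (2 * (m : ℚ) + 9) - 8 / 9) -
      ((8 / 9 - (340 + 27 * (2 * (m : ℚ))) / (234 + 18 * (2 * (m : ℚ)))) ^ 2 +
        (11 / 9 - (340 + 27 * (2 * (m : ℚ))) / (234 + 18 * (2 * (m : ℚ)))) ^ 2 +
        (13 / 9 - (340 + 27 * (2 * (m : ℚ))) / (234 + 18 * (2 * (m : ℚ)))) ^ 2 +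
        (14 / 9 - (340 + 27 * (2 * (m : ℚ))) / (234 + 18 * (2 * (m : ℚ)))) ^ 2 +
        (16 / 9 - (340 + 27 * (2 * (m : ℚ))) / (234 + 18 * (2 * (m : ℚ)))) ^ 2 +
        (((m : ℚ) + 4) * (1 - (340 + 27 * (2 * (m : ℚ))) / (234 + 18 * (2 * (m : ℚ)))) ^ 2 +
          (1 - (340 + 27 * (2 * (m : ℚ))) / (234 + 18 * (2 * (m : ℚ)))) * (1 / (2 * (m : ℚ) + 9)) *
            ((m : ℚ) + 4) * ((m : ℚ) + 4 + 1) +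
          (1 / (2 * (m : ℚ) + 9)) ^ 2 *
            (((m : ℚ) + 4) * ((m : ℚ) + 4 + 1) * (2 * ((m : ℚ) + 4) + 1)) / 6) +
        (((m : ℚ) + 4) * (2 - (340 + 27 * (2 * (m : ℚ))) / (234 + 18 * (2 * (m : ℚ)))) ^ 2 +
          (2 - (340 + 27 * (2 * (m : ℚ))) / (234 + 18 * (2 * (m : ℚ)))) * (-(1 / (2 * (m : ℚ) + 9))) *
            ((m : ℚ) + 4) * ((m : ℚ) + 4 + 1) +
          (-(1 / (2 * (m : ℚ) + 9))) ^ 2 *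
            (((m : ℚ) + 4) * ((m : ℚ) + 4 + 1) * (2 * ((m : ℚ) + 4) + 1)) / 6))
      = (24 * (m : ℚ) ^ 3 + 376 * (m : ℚ) ^ 2 + 1852 * (m : ℚ) + 2259) /
          (324 * (2 * (m : ℚ) + 9) * (2 * (m : ℚ) + 13)) := by
    have hd3 : (2 * (m : ℚ) + 13) ≠ 0 := by positivity
    field_simp
    ring
  rw [key]
  positivity
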